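/- If k is a finite field with q elements, then the number of conjugacy classes of the affine general linear group AGL_n(k) equals c_n + c_{n−1} + ... + c_1 + c_0, where c_d is the number of conjugacy classes of GL_d(k) (with the convention c_0 = 1). -/

import Mathlib

set_option linter.unusedSectionVars false
set_option maxHeartbeats 1000000
open Matrix

def AGL (k : Type*) [Field k] (n : ℕ) :
    Subgroup (Matrix.GeneralLinearGroup (Fin (n + 1)) k) where
  carrier := {g | ∀ i : Fin (n + 1),
    (g : Matrix (Fin (n + 1)) (Fin (n + 1)) k) i 0 = if i = 0 then 1 else 0}
  one_mem' := by
    intro i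
    simp [Matrix.one_apply]
  mul_mem' := by
    intro a b ha hb
    have hb' : ∀ j : Fin (n + 1),
        (b : Matrix (Fin (n + 1)) (Fin (n + 1)) k) j 0 = if j = 0 then 1 else 0 := hb
    have ha' : ∀ j : Fin (n + 1),
        (a : Matrix (Fin (n + 1)) (Fin (n + 1)) k) j 0 = if j = 0 then 1 else 0 := ha
    intro i
    show ((a * b : Matrix.GeneralLinearGroup (Fin (n + 1)) k) :
      Matrix (Fin (n + 1)) (Fin (n + 1)) k) i 0 = _
    rw [Units.val_mul, Matrix.mul_apply]
    simp only [hb', mul_ite, mul_one, mul_zero]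
    rw [Finset.sum_ite_eq' Finset.univ (0 : Fin (n + 1))
      (fun l => (a : Matrix (Fin (n + 1)) (Fin (n + 1)) k) i l)]
    simp [ha' i]
  inv_mem' := by
    intro a ha
    have ha' : ∀ j : Fin (n + 1),
        (a : Matrix (Fin (n + 1)) (Fin (n + 1)) k) j 0 = if j = 0 then 1 else 0 := ha
    intro i
    show ((a⁻¹ : Matrix.GeneralLinearGroup (Fin (n + 1)) k) :
      Matrix (Fin (n + 1)) (Fin (n + 1)) k) i 0 = _
    have h2 : (((a⁻¹ : Matrix.GeneralLinearGroup (Fin (n + 1)) k) :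
        Matrix (Fin (n + 1)) (Fin (n + 1)) k) *
        ((a : Matrix.GeneralLinearGroup (Fin (n + 1)) k) :
          Matrix (Fin (n + 1)) (Fin (n + 1)) k)) i 0 =
        ((a⁻¹ : Matrix.GeneralLinearGroup (Fin (n + 1)) k) :
          Matrix (Fin (n + 1)) (Fin (n + 1)) k) i 0 := by
      rw [Matrix.mul_apply]
      simp only [ha', mul_ite, mul_one, mul_zero]
      rw [Finset.sum_ite_eq' Finset.univ (0 : Fin (n + 1))
        (fun l => ((a⁻¹ : Matrix.GeneralLinearGroup (Fin (n + 1)) k) :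
          Matrix (Fin (n + 1)) (Fin (n + 1)) k) i l)]
      simp
    rw [← h2, Units.inv_mul, Matrix.one_apply]

namespace AGLProof

variable {k : Type*} [Field k] [Fintype k]

def affM {n : ℕ} (r : Fin n → k) (A : Matrix (Fin n) (Fin n) k) :
    Matrix (Fin (n+1)) (Fin (n+1)) k :=
  Matrix.of (Fin.cons (Fin.cons 1 r) (fun i => Fin.cons 0 (A i)))

@[simp] lemma affM_00 {n : ℕ} (r : Fin n → k) (A : Matrix (Fin n) (Fin n) k) :
    affM r A 0 0 = 1 := rfl

@[simp] lemma affM_0s {n : ℕ} (r : Fin n → k) (A : Matrix (Fin n) (Fin n) k) (j : Fin n) :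
    affM r A 0 j.succ = r j := by simp [affM]

@[simp] lemma affM_s0 {n : ℕ} (r : Fin n → k) (A : Matrix (Fin n) (Fin n) k) (i : Fin n) :
    affM r A i.succ 0 = 0 := by simp [affM]

@[simp] lemma affM_ss {n : ℕ} (r : Fin n → k) (A : Matrix (Fin n) (Fin n) k) (i j : Fin n) :
    affM r A i.succ j.succ = A i j := by simp [affM]

lemma affM_mul {n : ℕ} (r s : Fin n → k) (A B : Matrix (Fin n) (Fin n) k) :
    affM r A * affM s B = affM (s + r ᵥ* B) (A * B) := by
  ext i j
  rw [Matrix.mul_apply]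
  induction i using Fin.cases with
  | zero =>
    induction j using Fin.cases with
    | zero => rw [Fin.sum_univ_succ]; simp
    | succ j => rw [Fin.sum_univ_succ]; simp [vecMul, dotProduct, Pi.add_apply]
  | succ i =>
    induction j using Fin.cases with
    | zero => rw [Fin.sum_univ_succ]; simp
    | succ j => rw [Fin.sum_univ_succ]; simp [Matrix.mul_apply]

lemma affM_one {n : ℕ} : affM (0 : Fin n → k) (1 : Matrix (Fin n) (Fin n) k) = 1 := by
  ext i j
  induction i using Fin.cases with
  | zero =>
    induction j using Fin.cases with
    | zero => simp
    | succ j => simp [Matrix.one_apply, Fin.succ_ne_zero j, (Fin.succ_ne_zero j).symm]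
  | succ i =>
    induction j using Fin.cases with
    | zero => simp [Matrix.one_apply, Fin.succ_ne_zero i]
    | succ j => simp [Matrix.one_apply, Fin.succ_inj]

lemma affM_inj {n : ℕ} {r s : Fin n → k} {A B : Matrix (Fin n) (Fin n) k}
    (h : affM r A = affM s B) : r = s ∧ A = B := by
  constructor
  · funext j
    have := congrFun (congrFun h 0) j.succ
    simpa using this
  · ext i j
    have := congrFun (congrFun h i.succ) j.succ
    simpa using this

def affU {n : ℕ} (r : Fin n → k) (A : GL (Fin n) k) : GL (Fin (n+1)) k where
  val := affM r A.val
  inv := affM (-(r ᵥ* (A⁻¹).val)) (A⁻¹).val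
  val_inv := by
    rw [affM_mul]
    have h1 : (A.val : Matrix (Fin n) (Fin n) k) * (A⁻¹).val = 1 := by
      rw [← Units.val_mul, mul_inv_cancel, Units.val_one]
    rw [h1]
    rw [show -(r ᵥ* (A⁻¹).val) + r ᵥ* (A⁻¹).val = 0 by abel]
    exact affM_one
  inv_val := by
    rw [affM_mul]
    have h1 : ((A⁻¹).val : Matrix (Fin n) (Fin n) k) * A.val = 1 := by
      rw [← Units.val_mul, inv_mul_cancel, Units.val_one]
    rw [h1, Matrix.neg_vecMul, Matrix.vecMul_vecMul, ← Units.val_mul, inv_mul_cancel,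
      Units.val_one, Matrix.vecMul_one]
    rw [show r + -r = 0 by abel]
    exact affM_one

lemma affU_mem {n : ℕ} (r : Fin n → k) (A : GL (Fin n) k) : affU r A ∈ AGL k n := by
  intro i
  induction i using Fin.cases with
  | zero =>
    show affM r A.val 0 0 = _
    rw [affM_00, if_pos rfl]
  | succ i =>
    show affM r A.val i.succ 0 = _
    rw [affM_s0, if_neg (Fin.succ_ne_zero i)]

def F {n : ℕ} (p : (Fin n → k) × GL (Fin n) k) : AGL k n :=
  ⟨affU p.1 p.2, affU_mem p.1 p.2⟩

lemma block_mul {n : ℕ} (g h : Matrix (Fin (n+1)) (Fin (n+1)) k)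
    (hg : ∀ i : Fin (n+1), g i 0 = if i = 0 then 1 else 0) (i j : Fin n) :
    (g * h) i.succ j.succ = ∑ l : Fin n, g i.succ l.succ * h l.succ j.succ := by
  rw [Matrix.mul_apply, Fin.sum_univ_succ, hg i.succ, if_neg (Fin.succ_ne_zero i), zero_mul,
    zero_add]

lemma F_bijective {n : ℕ} : Function.Bijective (F (k := k) (n := n)) := by
  constructor
  · rintro ⟨r, A⟩ ⟨s, B⟩ h
    have h1 : affM r A.val = affM s B.val := congrArg (fun z => (z : AGL k n).val.val) h
    obtain ⟨h2, h3⟩ := affM_inj h1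
    exact Prod.ext h2 (Units.ext h3)
  · rintro ⟨g, hg⟩
    have hginv : (g⁻¹ : GL (Fin (n+1)) k) ∈ AGL k n := (AGL k n).inv_mem hg
    set r : Fin n → k := fun j => g.val 0 j.succ with hr
    set A' : Matrix (Fin n) (Fin n) k := Matrix.of fun i j => g.val i.succ j.succ with hA
    set B' : Matrix (Fin n) (Fin n) k := Matrix.of fun i j => (g⁻¹).val i.succ j.succ with hB
    have hone : ∀ i j : Fin n, (1 : Matrix (Fin (n+1)) (Fin (n+1)) k) i.succ j.succ
        = (1 : Matrix (Fin n) (Fin n) k) i j := by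
      intro i j
      simp [Matrix.one_apply, Fin.succ_inj]
    have hAB : A' * B' = 1 := by
      ext i j
      have := block_mul g.val (g⁻¹).val hg i j
      rw [← Units.val_mul, mul_inv_cancel, Units.val_one] at this
      rw [Matrix.mul_apply, ← hone i j, this]
      rfl
    have hBA : B' * A' = 1 := by
      ext i j
      have := block_mul (g⁻¹).val g.val hginv i j
      rw [← Units.val_mul, inv_mul_cancel, Units.val_one] at this
      rw [Matrix.mul_apply, ← hone i j, this]
      rfl
    refine ⟨(r, ⟨A', B', hAB, hBA⟩), ?_⟩
    apply Subtype.ext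
    apply Units.ext
    show affM r A' = g.val
    ext i j
    induction i using Fin.cases with
    | zero =>
      induction j using Fin.cases with
      | zero =>
        rw [affM_00]
        have h0 := hg 0
        rw [if_pos rfl] at h0
        exact h0.symm
      | succ j => rw [affM_0s]
    | succ i =>
      induction j using Fin.cases with
      | zero =>
        rw [affM_s0]
        have h0 := hg i.succ
        rw [if_neg (Fin.succ_ne_zero i)] at h0
        exact h0.symm
      | succ j => rw [affM_ss]; rfl

noncomputable def FEquiv {n : ℕ} : ((Fin n → k) × GL (Fin n) k) ≃ AGL k n :=
  Equiv.ofBijective F F_bijective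

lemma card_AGL {n : ℕ} :
    Nat.card (AGL k n) = Fintype.card k ^ n * Nat.card (GL (Fin n) k) := by
  rw [← Nat.card_congr (FEquiv (k := k) (n := n)), Nat.card_prod]
  congr 1
  simp [Nat.card_eq_fintype_card]

lemma commute_F_iff {n : ℕ} (r s : Fin n → k) (A B : GL (Fin n) k) :
    Commute (F (r, A)) (F (s, B)) ↔
      (A.val * B.val = B.val * A.val ∧ s + r ᵥ* B.val = r + s ᵥ* A.val) := by
  have h1 : ((F (r,A) * F (s,B) : AGL k n) : GL (Fin (n+1)) k).val
      = affM (s + r ᵥ* B.val) (A.val * B.val) := by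
    show affM r A.val * affM s B.val = _
    rw [affM_mul]
  have h2 : ((F (s,B) * F (r,A) : AGL k n) : GL (Fin (n+1)) k).val
      = affM (r + s ᵥ* A.val) (B.val * A.val) := by
    show affM s B.val * affM r A.val = _
    rw [affM_mul]
  constructor
  · intro h
    have h3 : ((F (r,A) * F (s,B) : AGL k n) : GL (Fin (n+1)) k).val
        = ((F (s,B) * F (r,A) : AGL k n) : GL (Fin (n+1)) k).val := by rw [h]
    rw [h1, h2] at h3
    obtain ⟨e1, e2⟩ := affM_inj h3
    exact ⟨e2, e1⟩
  · rintro ⟨hAB, hrs⟩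
    apply Subtype.ext
    apply Units.ext
    rw [h1, h2, hAB, hrs]

/-- regroup a doubly-indexed subtype sigma. -/
def sigmaSubtypeComm {ι κ : Type*} (P : ι → κ → Prop) :
    (Σ i : ι, {j : κ // P i j}) ≃ (Σ j : κ, {i : ι // P i j}) where
  toFun x := ⟨x.2.1, x.1, x.2.2⟩
  invFun x := ⟨x.2.1, x.1, x.2.2⟩
  left_inv x := rfl
  right_inv x := rfl

lemma nat_card_sigma {ι : Type*} [Finite ι] (f : ι → Type*) [∀ i, Finite (f i)] :
    Nat.card (Σ i, f i) = ∑ᶠ i, Nat.card (f i) := by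
  classical
  letI : Fintype ι := Fintype.ofFinite ι
  letI : ∀ i, Fintype (f i) := fun i => Fintype.ofFinite _
  rw [Nat.card_eq_fintype_card, Fintype.card_sigma, finsum_eq_sum_of_fintype]
  simp [Nat.card_eq_fintype_card]

/-- The big commuting-pair equivalence. -/
noncomputable def commEquiv (n : ℕ) :
    {p : AGL k n × AGL k n // Commute p.1 p.2} ≃
      Σ c : {p : GL (Fin n) k × GL (Fin n) k // p.1.val * p.2.val = p.2.val * p.1.val},
        {rs : (Fin n → k) × (Fin n → k) //
          rs.2 + rs.1 ᵥ* c.1.2.val = rs.1 + rs.2 ᵥ* c.1.1.val} := by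
  refine Equiv.trans (Equiv.trans
    (((FEquiv (k := k) (n := n)).prodCongr (FEquiv (k := k) (n := n))).subtypeEquiv
      (fun x => ?_)).symm
    ((Equiv.subtypeEquivRight (fun x => commute_F_iff x.1.1 x.2.1 x.1.2 x.2.2)))) ?_
  · exact Iff.rfl
  · exact
    { toFun := fun x => ⟨⟨(x.1.1.2, x.1.2.2), x.2.1⟩, ⟨(x.1.1.1, x.1.2.1), x.2.2⟩⟩
      invFun := fun y => ⟨((y.2.1.1, y.1.1.1), (y.2.1.2, y.1.1.2)), ⟨y.1.2, y.2.2⟩⟩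
      left_inv := fun x => rfl
      right_inv := fun y => rfl }

lemma card_submodule {ι : Type*} [Fintype ι] (W : Submodule k (ι → k)) :
    Nat.card W = Fintype.card k ^ Module.finrank k W := by
  letI : Fintype W := Fintype.ofFinite W
  rw [Nat.card_eq_fintype_card]
  exact Module.card_eq_pow_finrank

lemma card_pairs_fix {n : ℕ} (A B : Matrix (Fin n) (Fin n) k) :
    Nat.card {rs : (Fin n → k) × (Fin n → k) // rs.2 + rs.1 ᵥ* B = rs.1 + rs.2 ᵥ* A}
      = Fintype.card k ^ n * Nat.card {x : Fin n → k // A *ᵥ x = x ∧ B *ᵥ x = x} := by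
  classical
  set M : Matrix (Fin n ⊕ Fin n) (Fin n) k := fromRows (B - 1) (1 - A) with hM
  -- identify the pair set with the kernel of `vecMulLinear M`
  have e1 : {rs : (Fin n → k) × (Fin n → k) // rs.2 + rs.1 ᵥ* B = rs.1 + rs.2 ᵥ* A}
      ≃ LinearMap.ker M.vecMulLinear := by
    refine (Equiv.sumArrowEquivProdArrow (Fin n) (Fin n) k).symm.subtypeEquiv (fun rs => ?_)
    rw [LinearMap.mem_ker]
    show _ ↔ M.vecMulLinear (Sum.elim rs.1 rs.2) = 0
    rw [Matrix.vecMulLinear_apply, hM, sumElim_vecMul_fromRows,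
      Matrix.vecMul_sub, Matrix.vecMul_sub, Matrix.vecMul_one, Matrix.vecMul_one]
    constructor
    · intro h
      funext j
      have := congrFun h j
      simp only [Pi.add_apply, Pi.sub_apply, Pi.zero_apply] at this ⊢
      linear_combination this
    · intro h
      funext j
      have := congrFun h j
      simp only [Pi.add_apply, Pi.sub_apply, Pi.zero_apply] at this ⊢
      linear_combination this
  have e2 : {x : Fin n → k // A *ᵥ x = x ∧ B *ᵥ x = x} ≃ LinearMap.ker M.mulVecLin := by
    refine Equiv.subtypeEquivRight (fun x => ?_)
    rw [LinearMap.mem_ker, Matrix.mulVecLin_apply, hM, fromRows_mulVec]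
    constructor
    · rintro ⟨h1, h2⟩
      funext i
      rcases i with i | i
      · show ((B - 1) *ᵥ x) i = 0
        rw [Matrix.sub_mulVec, Matrix.one_mulVec, h2]
        simp
      · show ((1 - A) *ᵥ x) i = 0
        rw [Matrix.sub_mulVec, Matrix.one_mulVec, h1]
        simp
    · intro h
      have h1 : (B - 1) *ᵥ x = 0 := funext fun i => congrFun h (Sum.inl i)
      have h2 : (1 - A) *ᵥ x = 0 := funext fun i => congrFun h (Sum.inr i)
      rw [Matrix.sub_mulVec, Matrix.one_mulVec, sub_eq_zero] at h1 h2
      exact ⟨h2.symm, h1⟩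
  rw [Nat.card_congr e1, Nat.card_congr e2, card_submodule, card_submodule]
  -- rank-nullity bookkeeping
  have hrankV : Module.finrank k (LinearMap.range M.vecMulLinear) = M.rank := by
    rw [← Matrix.mulVecLin_transpose]
    exact M.rank_transpose
  have hV := LinearMap.finrank_range_add_finrank_ker M.vecMulLinear
  have hC := LinearMap.finrank_range_add_finrank_ker M.mulVecLin
  rw [Module.finrank_pi] at hV hC
  rw [Fintype.card_sum, Fintype.card_fin] at hV
  rw [Fintype.card_fin] at hC
  rw [hrankV] at hV
  have hrankC : Module.finrank k (LinearMap.range M.mulVecLin) = M.rank := rfl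
  rw [hrankC] at hC
  have hle : M.rank ≤ n := M.rank_le_card_width.trans (by simp)
  have h1 : Module.finrank k (LinearMap.ker M.vecMulLinear) = n + n - M.rank := by omega
  have h2 : Module.finrank k (LinearMap.ker M.mulVecLin) = n - M.rank := by omega
  rw [h1, h2, ← pow_add]
  congr 1
  omega

lemma exists_unit_mulVec {m : ℕ} (x : Fin (m+1) → k) (hx : x ≠ 0) :
    ∃ u : GL (Fin (m+1)) k, u.val *ᵥ (Pi.single 0 1 : Fin (m+1) → k) = x := by
  classical
  obtain ⟨f, hf⟩ : ∃ f : (Fin (m+1) → k) ≃ₗ[k] (Fin (m+1) → k), f (Pi.single 0 1) = x := by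
    have h1 : LinearIndepOn k id ({x} : Set (Fin (m+1) → k)) :=
      LinearIndepOn.singleton hx
    let b := Module.Basis.extend h1
    letI : Fintype (h1.extend (Set.subset_univ ({x} : Set (Fin (m+1) → k)))) :=
      Fintype.ofFinite _
    have hcard : Fintype.card (h1.extend (Set.subset_univ ({x} : Set (Fin (m+1) → k))))
        = m + 1 := by
      rw [← Module.finrank_eq_card_basis b, Module.finrank_pi, Fintype.card_fin]
    have hmem : x ∈ h1.extend (Set.subset_univ ({x} : Set (Fin (m+1) → k))) :=
      h1.subset_extend _ rfl
    let e0 := Fintype.equivFinOfCardEq hcard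
    let e := e0.trans (Equiv.swap (e0 ⟨x, hmem⟩) 0)
    let c := b.reindex e
    have hc : c 0 = x := by
      have h2 : e ⟨x, hmem⟩ = 0 := by
        show Equiv.swap (e0 ⟨x, hmem⟩) 0 (e0 ⟨x, hmem⟩) = 0
        exact Equiv.swap_apply_left _ _
      have h2' : e.symm 0 = ⟨x, hmem⟩ := by rw [← h2, Equiv.symm_apply_apply]
      show (b.reindex e) 0 = x
      rw [Module.Basis.reindex_apply, h2']
      exact Module.Basis.extend_apply_self h1 _
    refine ⟨(Pi.basisFun k (Fin (m+1))).equiv c (Equiv.refl _), ?_⟩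
    have := (Pi.basisFun k (Fin (m+1))).equiv_apply (i := 0) (b' := c) (e := Equiv.refl _)
    rw [Pi.basisFun_apply] at this
    rw [this, Equiv.refl_apply, hc]
  have hco : (f : (Fin (m+1) → k) →ₗ[k] (Fin (m+1) → k)) ∘ₗ
      (f.symm : (Fin (m+1) → k) →ₗ[k] (Fin (m+1) → k)) = LinearMap.id := by
    ext v
    simp
  have hco2 : (f.symm : (Fin (m+1) → k) →ₗ[k] (Fin (m+1) → k)) ∘ₗ
      (f : (Fin (m+1) → k) →ₗ[k] (Fin (m+1) → k)) = LinearMap.id := by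
    ext v
    simp
  refine ⟨⟨LinearMap.toMatrix' (f : (Fin (m+1) → k) →ₗ[k] (Fin (m+1) → k)),
    LinearMap.toMatrix' (f.symm : (Fin (m+1) → k) →ₗ[k] (Fin (m+1) → k)), ?_, ?_⟩, ?_⟩
  · rw [← LinearMap.toMatrix'_comp, hco, LinearMap.toMatrix'_id]
  · rw [← LinearMap.toMatrix'_comp, hco2, LinearMap.toMatrix'_id]
  · show LinearMap.toMatrix' (f : (Fin (m+1) → k) →ₗ[k] (Fin (m+1) → k)) *ᵥ _ = x
    rw [← Matrix.toLin'_apply, Matrix.toLin'_toMatrix']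
    exact hf

/-- commuting pairs with both members fixing the vector `x`. -/
def Fix {n : ℕ} (x : Fin n → k) : Type _ :=
  {c : {p : GL (Fin n) k × GL (Fin n) k // p.1.val * p.2.val = p.2.val * p.1.val} //
    c.1.1.val *ᵥ x = x ∧ c.1.2.val *ᵥ x = x}

noncomputable instance {n : ℕ} (x : Fin n → k) : Fintype (Fix (k := k) x) := by
  unfold Fix; classical
  letI : Fintype (GL (Fin n) k) := Fintype.ofFinite _
  infer_instance

def fixZeroEquiv {n : ℕ} : Fix (k := k) (0 : Fin n → k) ≃
    {p : GL (Fin n) k × GL (Fin n) k // p.1.val * p.2.val = p.2.val * p.1.val} where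
  toFun c := c.1
  invFun c := ⟨c, by simp, by simp⟩
  left_inv c := rfl
  right_inv c := rfl

def fixConjEquiv {n : ℕ} (u : GL (Fin n) k) (x : Fin n → k) :
    Fix (k := k) x ≃ Fix (k := k) (u.val *ᵥ x) where
  toFun c := ⟨⟨(u * c.1.1.1 * u⁻¹, u * c.1.1.2 * u⁻¹), by
      have h := c.1.2
      simp only [Units.val_mul]
      calc (u.val * c.1.1.1.val * (u⁻¹).val) * (u.val * c.1.1.2.val * (u⁻¹).val)
          = u.val * (c.1.1.1.val * ((u⁻¹).val * u.val) * c.1.1.2.val) * (u⁻¹).val := by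
            noncomm_ring
        _ = u.val * (c.1.1.1.val * c.1.1.2.val) * (u⁻¹).val := by
            rw [← Units.val_mul u⁻¹ u, inv_mul_cancel, Units.val_one, mul_one]
        _ = u.val * (c.1.1.2.val * c.1.1.1.val) * (u⁻¹).val := by rw [h]
        _ = (u.val * c.1.1.2.val * (u⁻¹).val) * (u.val * c.1.1.1.val * (u⁻¹).val) := by
            rw [show c.1.1.2.val * c.1.1.1.val
              = c.1.1.2.val * ((u⁻¹).val * u.val) * c.1.1.1.val by
                rw [← Units.val_mul u⁻¹ u, inv_mul_cancel, Units.val_one, mul_one]]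
            noncomm_ring⟩, by
      constructor
      · simp only [Units.val_mul, ← Matrix.mulVec_mulVec]
        rw [show (u⁻¹).val *ᵥ (u.val *ᵥ x) = x by
          rw [Matrix.mulVec_mulVec, ← Units.val_mul, inv_mul_cancel, Units.val_one,
            Matrix.one_mulVec], c.2.1]
      · simp only [Units.val_mul, ← Matrix.mulVec_mulVec]
        rw [show (u⁻¹).val *ᵥ (u.val *ᵥ x) = x by
          rw [Matrix.mulVec_mulVec, ← Units.val_mul, inv_mul_cancel, Units.val_one,
            Matrix.one_mulVec], c.2.2]⟩
  invFun c := ⟨⟨(u⁻¹ * c.1.1.1 * u, u⁻¹ * c.1.1.2 * u), by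
      have h := c.1.2
      simp only [Units.val_mul]
      calc ((u⁻¹).val * c.1.1.1.val * u.val) * ((u⁻¹).val * c.1.1.2.val * u.val)
          = (u⁻¹).val * (c.1.1.1.val * (u.val * (u⁻¹).val) * c.1.1.2.val) * u.val := by
            noncomm_ring
        _ = (u⁻¹).val * (c.1.1.1.val * c.1.1.2.val) * u.val := by
            rw [← Units.val_mul u u⁻¹, mul_inv_cancel, Units.val_one, mul_one]
        _ = (u⁻¹).val * (c.1.1.2.val * c.1.1.1.val) * u.val := by rw [h]
        _ = ((u⁻¹).val * c.1.1.2.val * u.val) * ((u⁻¹).val * c.1.1.1.val * u.val) := by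
            rw [show c.1.1.2.val * c.1.1.1.val
              = c.1.1.2.val * (u.val * (u⁻¹).val) * c.1.1.1.val by
                rw [← Units.val_mul u u⁻¹, mul_inv_cancel, Units.val_one, mul_one]]
            noncomm_ring⟩, by
      have hux : (u⁻¹).val *ᵥ (u.val *ᵥ x) = x := by
        rw [Matrix.mulVec_mulVec, ← Units.val_mul, inv_mul_cancel, Units.val_one,
          Matrix.one_mulVec]
      constructor
      · simp only [Units.val_mul, ← Matrix.mulVec_mulVec]
        rw [c.2.1, hux]
      · simp only [Units.val_mul, ← Matrix.mulVec_mulVec]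
        rw [c.2.2, hux]⟩
  left_inv c := by
    apply Subtype.ext
    apply Subtype.ext
    apply Prod.ext
    · show u⁻¹ * (u * c.1.1.1 * u⁻¹) * u = c.1.1.1
      group
    · show u⁻¹ * (u * c.1.1.2 * u⁻¹) * u = c.1.1.2
      group
  right_inv c := by
    apply Subtype.ext
    apply Subtype.ext
    apply Prod.ext
    · show u * (u⁻¹ * c.1.1.1 * u) * u⁻¹ = c.1.1.1
      group
    · show u * (u⁻¹ * c.1.1.2 * u) * u⁻¹ = c.1.1.2
      group

lemma mem_AGL_iff {m : ℕ} (A : GL (Fin (m+1)) k) :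
    A ∈ AGL k m ↔ A.val *ᵥ (Pi.single 0 1 : Fin (m+1) → k) = Pi.single 0 1 := by
  rw [Matrix.mulVec_single_one]
  constructor
  · intro h
    funext i
    rw [Matrix.col_apply]
    rw [h i, Pi.single_apply]
  · intro h i
    have := congrFun h i
    rw [Matrix.col_apply] at this
    rw [this, Pi.single_apply]

def fixE0Equiv {m : ℕ} : Fix (k := k) (Pi.single 0 1 : Fin (m+1) → k) ≃
    {p : AGL k m × AGL k m // Commute p.1 p.2} where
  toFun c := ⟨(⟨c.1.1.1, (mem_AGL_iff _).2 c.2.1⟩, ⟨c.1.1.2, (mem_AGL_iff _).2 c.2.2⟩), by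
    have h := c.1.2
    show (_ : AGL k m) * _ = _ * _
    apply Subtype.ext
    apply Units.ext
    exact h⟩
  invFun p := ⟨⟨(p.1.1.val, p.1.2.val), by
      have h := p.2
      have h2 : (p.1.1 * p.1.2 : AGL k m) = p.1.2 * p.1.1 := h
      have h3 := congrArg (fun z : AGL k m => ((z : GL (Fin (m+1)) k) :
        Matrix (Fin (m+1)) (Fin (m+1)) k)) h2
      exact h3⟩,
    (mem_AGL_iff _).1 p.1.1.2, (mem_AGL_iff _).1 p.1.2.2⟩
  left_inv c := rfl
  right_inv p := rfl

def commValEquiv {n : ℕ} :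
    {p : GL (Fin n) k × GL (Fin n) k // p.1.val * p.2.val = p.2.val * p.1.val} ≃
      {p : GL (Fin n) k × GL (Fin n) k // Commute p.1 p.2} :=
  Equiv.subtypeEquivRight (fun p => by
    constructor
    · intro h
      exact Units.ext h
    · intro h
      exact congrArg Units.val h)

lemma card_fix_ne_zero {m : ℕ} (x : Fin (m+1) → k) (hx : x ≠ 0) :
    Nat.card (Fix (k := k) x) = Nat.card {p : AGL k m × AGL k m // Commute p.1 p.2} := by
  obtain ⟨u, hu⟩ := exists_unit_mulVec x hx
  have e1 : Fix (k := k) (Pi.single 0 1 : Fin (m+1) → k) ≃ Fix (k := k) x := by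
    rw [← hu]
    exact fixConjEquiv u _
  rw [← Nat.card_congr e1, Nat.card_congr (fixE0Equiv (k := k) (m := m))]

lemma comm_count {m : ℕ} :
    Nat.card {p : AGL k (m+1) × AGL k (m+1) // Commute p.1 p.2}
      = Fintype.card k ^ (m+1) *
        (Nat.card {p : GL (Fin (m+1)) k × GL (Fin (m+1)) k // Commute p.1 p.2}
          + (Fintype.card k ^ (m+1) - 1) *
            Nat.card {p : AGL k m × AGL k m // Commute p.1 p.2}) := by
  classical
  letI : Fintype {p : GL (Fin (m+1)) k × GL (Fin (m+1)) k //
    p.1.val * p.2.val = p.2.val * p.1.val} := Fintype.ofFinite _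
  calc Nat.card {p : AGL k (m+1) × AGL k (m+1) // Commute p.1 p.2}
      = Nat.card (Σ c : {p : GL (Fin (m+1)) k × GL (Fin (m+1)) k //
          p.1.val * p.2.val = p.2.val * p.1.val},
          {rs : (Fin (m+1) → k) × (Fin (m+1) → k) //
            rs.2 + rs.1 ᵥ* c.1.2.val = rs.1 + rs.2 ᵥ* c.1.1.val}) :=
        Nat.card_congr (commEquiv (m+1))
    _ = ∑ c : {p : GL (Fin (m+1)) k × GL (Fin (m+1)) k //
          p.1.val * p.2.val = p.2.val * p.1.val},
          Nat.card {rs : (Fin (m+1) → k) × (Fin (m+1) → k) //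
            rs.2 + rs.1 ᵥ* c.1.2.val = rs.1 + rs.2 ᵥ* c.1.1.val} := by
        rw [nat_card_sigma, finsum_eq_sum_of_fintype]
    _ = ∑ c : {p : GL (Fin (m+1)) k × GL (Fin (m+1)) k //
          p.1.val * p.2.val = p.2.val * p.1.val},
          Fintype.card k ^ (m+1) *
            Nat.card {x : Fin (m+1) → k // c.1.1.val *ᵥ x = x ∧ c.1.2.val *ᵥ x = x} :=
        Finset.sum_congr rfl (fun c _ => card_pairs_fix c.1.1.val c.1.2.val)
    _ = Fintype.card k ^ (m+1) * ∑ c : {p : GL (Fin (m+1)) k × GL (Fin (m+1)) k //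
          p.1.val * p.2.val = p.2.val * p.1.val},
          Nat.card {x : Fin (m+1) → k // c.1.1.val *ᵥ x = x ∧ c.1.2.val *ᵥ x = x} := by
        rw [Finset.mul_sum]
    _ = Fintype.card k ^ (m+1) *
          Nat.card (Σ c : {p : GL (Fin (m+1)) k × GL (Fin (m+1)) k //
            p.1.val * p.2.val = p.2.val * p.1.val},
            {x : Fin (m+1) → k // c.1.1.val *ᵥ x = x ∧ c.1.2.val *ᵥ x = x}) := by
        rw [nat_card_sigma, finsum_eq_sum_of_fintype]
    _ = Fintype.card k ^ (m+1) *
          Nat.card (Σ x : Fin (m+1) → k, Fix (k := k) x) := by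
        rw [Nat.card_congr (sigmaSubtypeComm
          (fun (c : {p : GL (Fin (m+1)) k × GL (Fin (m+1)) k //
            p.1.val * p.2.val = p.2.val * p.1.val}) (x : Fin (m+1) → k) =>
              c.1.1.val *ᵥ x = x ∧ c.1.2.val *ᵥ x = x))]
        rfl
    _ = Fintype.card k ^ (m+1) * ∑ x : Fin (m+1) → k, Nat.card (Fix (k := k) x) := by
        rw [nat_card_sigma, finsum_eq_sum_of_fintype]
    _ = Fintype.card k ^ (m+1) *
        (Nat.card {p : GL (Fin (m+1)) k × GL (Fin (m+1)) k // Commute p.1 p.2}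
          + (Fintype.card k ^ (m+1) - 1) *
            Nat.card {p : AGL k m × AGL k m // Commute p.1 p.2}) := by
        congr 1
        rw [← Finset.sum_erase_add Finset.univ _ (Finset.mem_univ (0 : Fin (m+1) → k))]
        have h0 : Nat.card (Fix (k := k) (0 : Fin (m+1) → k))
            = Nat.card {p : GL (Fin (m+1)) k × GL (Fin (m+1)) k // Commute p.1 p.2} := by
          rw [Nat.card_congr (fixZeroEquiv (k := k) (n := m+1)),
            Nat.card_congr (commValEquiv (k := k) (n := m+1))]
        have h1 : ∀ x ∈ Finset.univ.erase (0 : Fin (m+1) → k),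
            Nat.card (Fix (k := k) x)
              = Nat.card {p : AGL k m × AGL k m // Commute p.1 p.2} := by
          intro x hxmem
          exact card_fix_ne_zero x (Finset.mem_erase.1 hxmem).1
        rw [Finset.sum_congr rfl h1, Finset.sum_const, smul_eq_mul, h0,
          Finset.card_erase_of_mem (Finset.mem_univ _), Finset.card_univ, Fintype.card_fun,
          Fintype.card_fin]
        ring

lemma card_GL_eq {m : ℕ} :
    Nat.card (GL (Fin (m+1)) k)
      = (Fintype.card k ^ (m+1) - 1) * Nat.card (AGL k m) := by
  classical
  have hnz : ∀ g : GL (Fin (m+1)) k, g.val *ᵥ (Pi.single 0 1 : Fin (m+1) → k) ≠ 0 := by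
    intro g h
    have h2 : (g⁻¹).val *ᵥ (g.val *ᵥ (Pi.single 0 1 : Fin (m+1) → k)) = Pi.single 0 1 := by
      rw [Matrix.mulVec_mulVec, ← Units.val_mul, inv_mul_cancel, Units.val_one,
        Matrix.one_mulVec]
    rw [h, Matrix.mulVec_zero] at h2
    have h3 := congrFun h2 0
    simp at h3
  have e1 : GL (Fin (m+1)) k ≃
      Σ x : Fin (m+1) → k,
        {g : GL (Fin (m+1)) k // g.val *ᵥ (Pi.single 0 1 : Fin (m+1) → k) = x} :=
    { toFun := fun g => ⟨g.val *ᵥ Pi.single 0 1, g, rfl⟩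
      invFun := fun y => y.2.1
      left_inv := fun g => rfl
      right_inv := fun y => by
        rcases y with ⟨x, ⟨g, hg⟩⟩
        subst hg
        rfl }
  have hfiber : ∀ x : Fin (m+1) → k, x ≠ 0 →
      Nat.card {g : GL (Fin (m+1)) k // g.val *ᵥ (Pi.single 0 1 : Fin (m+1) → k) = x}
        = Nat.card (AGL k m) := by
    intro x hx
    obtain ⟨u, hu⟩ := exists_unit_mulVec x hx
    have e2 : {g : GL (Fin (m+1)) k // g.val *ᵥ (Pi.single 0 1 : Fin (m+1) → k) = x}
        ≃ {g : GL (Fin (m+1)) k //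
            g.val *ᵥ (Pi.single 0 1 : Fin (m+1) → k) = Pi.single 0 1} :=
      { toFun := fun g => ⟨u⁻¹ * g.1, by
          rw [Units.val_mul, ← Matrix.mulVec_mulVec, g.2, ← hu, Matrix.mulVec_mulVec,
            ← Units.val_mul, inv_mul_cancel, Units.val_one, Matrix.one_mulVec]⟩
        invFun := fun g => ⟨u * g.1, by
          rw [Units.val_mul, ← Matrix.mulVec_mulVec, g.2, hu]⟩
        left_inv := fun g => by
          apply Subtype.ext
          show u * (u⁻¹ * g.1) = g.1
          group
        right_inv := fun g => by
          apply Subtype.ext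
          show u⁻¹ * (u * g.1) = g.1
          group }
    have e3 : {g : GL (Fin (m+1)) k //
        g.val *ᵥ (Pi.single 0 1 : Fin (m+1) → k) = Pi.single 0 1} ≃ AGL k m :=
      Equiv.subtypeEquivRight (fun g => (mem_AGL_iff g).symm)
    rw [Nat.card_congr (e2.trans e3)]
  have hzero :
      Nat.card {g : GL (Fin (m+1)) k //
        g.val *ᵥ (Pi.single 0 1 : Fin (m+1) → k) = (0 : Fin (m+1) → k)} = 0 := by
    haveI : IsEmpty {g : GL (Fin (m+1)) k //
        g.val *ᵥ (Pi.single 0 1 : Fin (m+1) → k) = (0 : Fin (m+1) → k)} :=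
      ⟨fun g => hnz g.1 g.2⟩
    exact Nat.card_of_isEmpty
  rw [Nat.card_congr e1, nat_card_sigma, finsum_eq_sum_of_fintype,
    ← Finset.sum_erase_add Finset.univ _ (Finset.mem_univ (0 : Fin (m+1) → k)), hzero,
    add_zero, Finset.sum_congr rfl
      (fun x hxmem => hfiber x (Finset.mem_erase.1 hxmem).1),
    Finset.sum_const, smul_eq_mul,
    Finset.card_erase_of_mem (Finset.mem_univ _), Finset.card_univ, Fintype.card_fun,
    Fintype.card_fin]

lemma conjclasses_card_one_of_subsingleton {G : Type*} [Group G] [Subsingleton G] :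
    Nat.card (ConjClasses G) = 1 := by
  haveI : Subsingleton (ConjClasses G) := ⟨fun x y => by
    obtain ⟨a, rfl⟩ := ConjClasses.mk_surjective x
    obtain ⟨b, rfl⟩ := ConjClasses.mk_surjective y
    rw [Subsingleton.elim a b]⟩
  rw [Nat.card_eq_one_iff_unique]
  exact ⟨inferInstance, ⟨ConjClasses.mk 1⟩⟩

lemma key_rec {m : ℕ} :
    Nat.card (ConjClasses (AGL k (m+1)))
      = Nat.card (ConjClasses (GL (Fin (m+1)) k)) + Nat.card (ConjClasses (AGL k m)) := by
  have hA := card_comm_eq_card_conjClasses_mul_card (AGL k (m+1))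
  have hG := card_comm_eq_card_conjClasses_mul_card (GL (Fin (m+1)) k)
  have hB := card_comm_eq_card_conjClasses_mul_card (AGL k m)
  rw [comm_count, hG, hB, card_AGL (k := k) (n := m+1)] at hA
  have h1 : (Fintype.card k ^ (m+1) - 1)
        * (Nat.card (ConjClasses (AGL k m)) * Nat.card (AGL k m))
      = Nat.card (ConjClasses (AGL k m)) * Nat.card (GL (Fin (m+1)) k) := by
    rw [card_GL_eq (k := k) (m := m)]
    ring
  rw [h1] at hA
  have h2 : Fintype.card k ^ (m+1) *
        (Nat.card (ConjClasses (GL (Fin (m+1)) k)) * Nat.card (GL (Fin (m+1)) k)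
          + Nat.card (ConjClasses (AGL k m)) * Nat.card (GL (Fin (m+1)) k))
      = (Nat.card (ConjClasses (GL (Fin (m+1)) k)) + Nat.card (ConjClasses (AGL k m)))
          * (Fintype.card k ^ (m+1) * Nat.card (GL (Fin (m+1)) k)) := by
    ring
  rw [h2] at hA
  have hpos : 0 < Fintype.card k ^ (m+1) * Nat.card (GL (Fin (m+1)) k) := by
    apply Nat.mul_pos
    · exact Nat.pow_pos Fintype.card_pos
    · exact Nat.card_pos
  exact (Nat.eq_of_mul_eq_mul_right hpos hA).symm

end AGLProof

theorem stmt18 (k : Type*) [Field k] [Fintype k] (n : ℕ) :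
    Nat.card (ConjClasses (AGL k n)) =
      ∑ d ∈ Finset.range (n + 1),
        Nat.card (ConjClasses (Matrix.GeneralLinearGroup (Fin d) k)) := by
  induction n with
  | zero =>
    rw [Finset.sum_range_one]
    haveI h1 : Subsingleton (AGL k 0) := by
      constructor
      rintro ⟨a, ha⟩ ⟨b, hb⟩
      apply Subtype.ext
      apply Units.ext
      ext i j
      have hi : i = 0 := Fin.fin_one_eq_zero i
      have hj : j = 0 := Fin.fin_one_eq_zero j
      subst hi
      subst hj
      have h2 := ha 0
      have h3 := hb 0
      rw [if_pos rfl] at h2 h3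
      show (a : Matrix (Fin (0+1)) (Fin (0+1)) k) 0 0
        = (b : Matrix (Fin (0+1)) (Fin (0+1)) k) 0 0
      rw [h2, h3]
    haveI h4 : Subsingleton (Matrix.GeneralLinearGroup (Fin 0) k) := by
      constructor
      intro a b
      apply Units.ext
      ext i j
      exact i.elim0
    rw [AGLProof.conjclasses_card_one_of_subsingleton,
      AGLProof.conjclasses_card_one_of_subsingleton]
  | succ m ih =>
    rw [Finset.sum_range_succ, ← ih, AGLProof.key_rec]
    exact add_comm _ _
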